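/- Let X be a topological vector space, Y ⊆ X a subspace, and A ⊆ X an open convex set intersecting Y. If there exists a continuous quasiconvex function δ : A → [0,∞) with δ⁻¹(0) = A ∩ Y, then A ∩ Y is the intersection of a countable family of sets that are open and convex in X. -/

import Mathlib

theorem stmt_8 {X : Type*} [AddCommGroup X] [Module ℝ X] [TopologicalSpace X]
    [IsTopologicalAddGroup X] [ContinuousSMul ℝ X]
    (Y : Submodule ℝ X) (A : Set X) (hAopen : IsOpen A) (hAconv : Convex ℝ A)
    (hne : (A ∩ (Y : Set X)).Nonempty)
    (δ : X → ℝ) (hδcont : ContinuousOn δ A) (hδqc : QuasiconvexOn ℝ A δ)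
    (hδnonneg : ∀ x ∈ A, 0 ≤ δ x)
    (hker : {x ∈ A | δ x = 0} = A ∩ (Y : Set X)) :
    ∃ U : ℕ → Set X, (∀ n, IsOpen (U n) ∧ Convex ℝ (U n)) ∧
      (⋂ n, U n) = A ∩ (Y : Set X) := by
  refine ⟨fun n => A ∩ δ ⁻¹' Set.Iio (1 / (n + 1)), fun n => ⟨?_, ?_⟩, ?_⟩
  · exact hδcont.isOpen_inter_preimage hAopen isOpen_Iio
  · intro x hx y hy a b ha hb hab
    have hcx : x ∈ {z ∈ A | δ z ≤ max (δ x) (δ y)} := ⟨hx.1, le_max_left _ _⟩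
    have hcy : y ∈ {z ∈ A | δ z ≤ max (δ x) (δ y)} := ⟨hy.1, le_max_right _ _⟩
    have hz := hδqc (max (δ x) (δ y)) hcx hcy ha hb hab
    exact ⟨hz.1, lt_of_le_of_lt hz.2 (max_lt hx.2 hy.2)⟩
  · ext x
    simp only [Set.mem_iInter, Set.mem_inter_iff, Set.mem_preimage, Set.mem_Iio]
    constructor
    · intro h
      have hxA : x ∈ A := (h 0).1
      have hδ0 : δ x = 0 := by
        refine le_antisymm ?_ (hδnonneg x hxA)
        by_contra hpos
        push_neg at hpos
        obtain ⟨n, hn⟩ := exists_nat_one_div_lt hpos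
        exact absurd (h n).2 (not_lt.2 hn.le)
      have : x ∈ {z ∈ A | δ z = 0} := ⟨hxA, hδ0⟩
      rw [hker] at this
      exact this
    · intro h n
      have : x ∈ {z ∈ A | δ z = 0} := by rw [hker]; exact h
      refine ⟨this.1, ?_⟩
      rw [this.2]
      positivity
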